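/- arXiv:1607.04578 — 11 statements merged into one kernel-verified Lean document; each statement's English description precedes it below -/
import Mathlib

section
/- Let m ≥ 2 and d ≥ 2 be integers and define g(x) = cot(π(x + 1/(2m))/d). Then for all real x, y with 0 ≤ x < y < d - 1/(2m), one has (1 + 2m·x)·g(x) > (1 + 2m·y)·g(y). -/
open Real

lemma my_hasDerivAt_cot {t : ℝ} (ht : Real.sin t ≠ 0) :
    HasDerivAt Real.cot (-(1 / Real.sin t ^ 2)) t := by
  have h := (Real.hasDerivAt_cos t).div (Real.hasDerivAt_sin t) ht
  have heq : Real.cot = fun u => Real.cos u / Real.sin u := by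
    funext u; exact Real.cot_eq_cos_div_sin u
  rw [heq]
  refine HasDerivAt.congr_deriv h ?_
  have hsq := Real.sin_sq_add_cos_sq t
  field_simp
  nlinarith [sq_nonneg (Real.sin t)]

lemma tcot_strictAnti : StrictAntiOn (fun t => t * Real.cot t) (Set.Ioo 0 π) := by
  apply strictAntiOn_of_deriv_neg (convex_Ioo 0 π)
  · apply ContinuousOn.congr
      (f := fun t : ℝ => t * (Real.cos t / Real.sin t))
    · exact continuousOn_id.mul (Real.continuous_cos.continuousOn.div
        Real.continuous_sin.continuousOn
        (fun t ht => (Real.sin_pos_of_pos_of_lt_pi ht.1 ht.2).ne'))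
    · intro t _; simp [Real.cot_eq_cos_div_sin]
  · intro t ht
    rw [interior_Ioo] at ht
    have hs : 0 < Real.sin t := Real.sin_pos_of_pos_of_lt_pi ht.1 ht.2
    have hder : HasDerivAt (fun t => t * Real.cot t)
        (1 * Real.cot t + t * (-(1 / Real.sin t ^ 2))) t :=
      (hasDerivAt_id t).mul (my_hasDerivAt_cot hs.ne')
    rw [hder.deriv]
    have h2 : Real.sin t * Real.cos t < t := by
      have h3 := Real.sin_lt (show (0:ℝ) < 2 * t by linarith [ht.1])
      have h4 := Real.sin_two_mul t
      nlinarith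
    rw [Real.cot_eq_cos_div_sin]
    have heq : 1 * (Real.cos t / Real.sin t) + t * (-(1 / Real.sin t ^ 2)) =
        (Real.sin t * Real.cos t - t) / Real.sin t ^ 2 := by
      field_simp; ring
    rw [heq]
    exact div_neg_of_neg_of_pos (by linarith) (by positivity)

theorem g_lemma (m d : ℤ) (hm : 2 ≤ m) (hd : 2 ≤ d) (x y : ℝ)
    (hx : 0 ≤ x) (hxy : x < y) (hy : y < (d : ℝ) - 1 / (2 * (m : ℝ))) :
    (1 + 2 * (m : ℝ) * x) * Real.cot (π * (x + 1 / (2 * (m : ℝ))) / (d : ℝ)) >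
      (1 + 2 * (m : ℝ) * y) * Real.cot (π * (y + 1 / (2 * (m : ℝ))) / (d : ℝ)) := by
  have hm' : (2:ℝ) ≤ (m:ℝ) := by exact_mod_cast hm
  have hd' : (2:ℝ) ≤ (d:ℝ) := by exact_mod_cast hd
  have hπ : 0 < π := Real.pi_pos
  have hm0 : (0:ℝ) < (m:ℝ) := by linarith
  have hd0 : (0:ℝ) < (d:ℝ) := by linarith
  set c : ℝ := 1 / (2 * (m:ℝ)) with hc
  have hc0 : 0 < c := by positivity
  set a : ℝ := π * (x + c) / d with ha
  set b : ℝ := π * (y + c) / d with hb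
  have hamem : a ∈ Set.Ioo 0 π := by
    constructor
    · exact div_pos (mul_pos hπ (by linarith)) hd0
    · rw [ha, div_lt_iff₀ hd0]
      have : x + c < d := by linarith
      nlinarith
  have hbmem : b ∈ Set.Ioo 0 π := by
    constructor
    · exact div_pos (mul_pos hπ (by linarith)) hd0
    · rw [hb, div_lt_iff₀ hd0]
      have : y + c < d := by linarith
      nlinarith
  have hab : a < b := by
    rw [ha, hb]
    rw [div_lt_div_iff₀ hd0 hd0]
    nlinarith [mul_pos (mul_pos hπ hd0) (sub_pos.mpr hxy)]
  have key := tcot_strictAnti hamem hbmem hab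
  simp only at key
  have hpos : 0 < 2 * (m:ℝ) * d / π := by positivity
  have ea : 1 + 2 * (m:ℝ) * x = (2 * (m:ℝ) * d / π) * a := by
    rw [ha, hc]; field_simp; ring
  have eb : 1 + 2 * (m:ℝ) * y = (2 * (m:ℝ) * d / π) * b := by
    rw [hb, hc]; field_simp; ring
  rw [ea, eb]
  have := mul_lt_mul_of_pos_left key hpos
  nlinarith [this]
end

section
/- Let m ≥ 2 and d ≥ 2 be integers and for an integer k define α̂_k = cot(π(k + 1/(2m))/d). Then for all integers k, l, p with 0 < k < d, 0 < l < d, and 0 ≤ p < d, one has α̂_0 + α̂_p > α̂_k + α̂_l. -/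
open Real

lemma cot_anti {a b : ℝ} (ha : 0 < a) (hab : a < b) (hb : b < π) :
    Real.cot b < Real.cot a := by
  have hsa : 0 < Real.sin a := Real.sin_pos_of_pos_of_lt_pi ha (hab.trans hb)
  have hsb : 0 < Real.sin b := Real.sin_pos_of_pos_of_lt_pi (ha.trans hab) hb
  rw [Real.cot_eq_cos_div_sin, Real.cot_eq_cos_div_sin, div_lt_div_iff₀ hsb hsa]
  have h1 : Real.cos a * Real.sin b - Real.cos b * Real.sin a = Real.sin (b - a) := by
    rw [Real.sin_sub]; ring
  have h2 : 0 < Real.sin (b - a) :=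
    Real.sin_pos_of_pos_of_lt_pi (by linarith) (by linarith)
  linarith

lemma cot_anti_le {a b : ℝ} (ha : 0 < a) (hab : a ≤ b) (hb : b < π) :
    Real.cot b ≤ Real.cot a := by
  rcases eq_or_lt_of_le hab with h | h
  · rw [h]
  · exact (cot_anti ha h hb).le

lemma cot_lt_inv {x : ℝ} (hx : 0 < x) (hx' : x < π / 2) : Real.cot x < 1 / x := by
  have hsin : 0 < Real.sin x := Real.sin_pos_of_pos_of_lt_pi hx (by linarith [Real.pi_pos])
  have hcos : 0 < Real.cos x := Real.cos_pos_of_mem_Ioo ⟨by linarith [Real.pi_pos], hx'⟩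
  have ht := Real.lt_tan hx hx'
  rw [Real.tan_eq_sin_div_cos, lt_div_iff₀ hcos] at ht
  rw [Real.cot_eq_cos_div_sin, div_lt_div_iff₀ hsin hx]
  nlinarith

lemma inv_sub_lt_cot {x : ℝ} (hx : 0 < x) (hx' : x < π / 2) :
    1 / x - x / 2 < Real.cot x := by
  have hsin : 0 < Real.sin x := Real.sin_pos_of_pos_of_lt_pi hx (by linarith [Real.pi_pos])
  have hcos : 0 < Real.cos x := Real.cos_pos_of_mem_Ioo ⟨by linarith [Real.pi_pos], hx'⟩
  have h1 : Real.sin x < x := Real.sin_lt hx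
  have h2 : 1 - x ^ 2 / 2 ≤ Real.cos x := Real.one_sub_sq_div_two_le_cos
  have key : (2 - x ^ 2) * Real.sin x < 2 * x * Real.cos x := by
    rcases le_or_gt (2 - x ^ 2) 0 with h | h
    · nlinarith
    · nlinarith
  have hrw : 1 / x - x / 2 = (2 - x ^ 2) / (2 * x) := by field_simp
  rw [Real.cot_eq_cos_div_sin, lt_div_iff₀ hsin, hrw, div_mul_eq_mul_div,
    div_lt_iff₀ (by positivity : (0:ℝ) < 2 * x)]
  linarith

lemma cot_nonpos {x : ℝ} (hx : π / 2 ≤ x) (hx' : x < π) : Real.cot x ≤ 0 := by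
  have hsin : 0 < Real.sin x := Real.sin_pos_of_pos_of_lt_pi (by linarith [Real.pi_pos]) hx'
  have hcos : Real.cos x ≤ 0 := Real.cos_nonpos_of_pi_div_two_le_of_le hx (by linarith [Real.pi_pos])
  rw [Real.cot_eq_cos_div_sin]
  exact div_nonpos_of_nonpos_of_nonneg hcos hsin.le

lemma cot_pi_sub' (x : ℝ) : Real.cot (π - x) = -Real.cot x := by
  rw [Real.cot_eq_cos_div_sin, Real.cot_eq_cos_div_sin, Real.cos_pi_sub, Real.sin_pi_sub,
    neg_div]

set_option maxHeartbeats 1000000 in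
lemma key_ineq {E D : ℝ} (hE : 0 < E) (hE4 : E ≤ 1/4) (hD : 2 ≤ D) :
    Real.cot (π * (0 + E) / D) + Real.cot (π * ((D - 1) + E) / D) >
      2 * Real.cot (π * (1 + E) / D) := by
  have hpi := Real.pi_pos
  have hpi3 : 3 < π := Real.pi_gt_three
  have hpi4 : π < 3.15 := Real.pi_lt_d2
  have hD0 : (0:ℝ) < D := by linarith
  set a := π * (0 + E) / D with ha_def
  set b := π * (1 - E) / D with hb_def
  set c := π * (1 + E) / D with hc_def
  have hsub : π * ((D - 1) + E) / D = π - b := by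
    rw [hb_def, eq_sub_iff_add_eq, ← add_div, div_eq_iff hD0.ne']; ring
  rw [hsub, cot_pi_sub' b]
  clear_value a b c
  have ha : 0 < a := by rw [ha_def]; positivity
  have hab : a < b := by
    rw [ha_def, hb_def, div_lt_div_iff₀ hD0 hD0]
    nlinarith [mul_pos (mul_pos hpi hD0) (by linarith : (0:ℝ) < 1 - 2 * E)]
  have hb2 : b < π / 2 := by
    rw [hb_def, div_lt_div_iff₀ hD0 (by norm_num : (0:ℝ) < 2)]
    nlinarith
  have hbc : b < c := by
    rw [hb_def, hc_def, div_lt_div_iff₀ hD0 hD0]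
    nlinarith [mul_pos (mul_pos hpi hD0) (by linarith : (0:ℝ) < 2 * E)]
  have hcpi : c < π := by
    rw [hc_def, div_lt_iff₀ hD0]
    nlinarith
  rcases le_or_gt (π/2) c with hc | hc
  · have h1 : Real.cot b < Real.cot a := cot_anti ha hab (by linarith)
    have h2 : Real.cot c ≤ 0 := cot_nonpos hc hcpi
    linarith
  · have h1 : 1 / a - a / 2 < Real.cot a := inv_sub_lt_cot ha (by linarith)
    have h2 : Real.cot b < 1 / b := cot_lt_inv (by linarith) hb2
    have h3 : Real.cot c < 1 / c := cot_lt_inv (by linarith) hc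
    have h4 : 1 / b + 2 * (1 / c) + a / 2 ≤ 1 / a := by
      rw [ha_def, hb_def, hc_def]
      rw [one_div, one_div, one_div, inv_div, inv_div, inv_div]
      have e1 : D / (π * (1 - E)) ≤ 4 * D / (3 * π) := by
        rw [div_le_div_iff₀ (by nlinarith) (by positivity)]
        nlinarith [mul_nonneg (mul_pos hpi hD0).le (by linarith : (0:ℝ) ≤ 1 - 4 * E)]
      have e2 : D / (π * (1 + E)) ≤ D / π := by
        apply div_le_div_of_nonneg_left hD0.le (by positivity)
        nlinarith
      have e3 : π * (0 + E) / D / 2 ≤ π / 16 := by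
        have hr : π * (0 + E) / D / 2 = π * E / (2 * D) := by ring
        rw [hr, div_le_div_iff₀ (by positivity) (by norm_num : (0:ℝ) < 16)]
        nlinarith
      have e4 : 4 * D / π ≤ D / (π * (0 + E)) := by
        rw [div_le_div_iff₀ (by positivity) (by positivity)]
        nlinarith [mul_nonneg (mul_pos hpi hD0).le (by linarith : (0:ℝ) ≤ 1 - 4 * E)]
      have e5 : 4 * D / (3 * π) + 2 * (D / π) + π / 16 ≤ 4 * D / π := by
        have h6 : π / 16 ≤ 2 * D / (3 * π) := by
          rw [div_le_div_iff₀ (by norm_num : (0:ℝ) < 16) (by positivity)]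
          nlinarith
        have hx : 4 * D / (3 * π) + 2 * (D / π) + 2 * D / (3 * π) = 4 * D / π := by
          ring
        linarith
      linarith
    linarith

lemma main_aux {E D x y z : ℝ} (hE : 0 < E) (hE4 : E ≤ 1/4) (hD : 2 ≤ D)
    (hx : 1 ≤ x) (hx' : x ≤ D - 1) (hy : 1 ≤ y) (hy' : y ≤ D - 1)
    (hz : 0 ≤ z) (hz' : z ≤ D - 1) :
    Real.cot (π * (0 + E) / D) + Real.cot (π * (z + E) / D) >
      Real.cot (π * (x + E) / D) + Real.cot (π * (y + E) / D) := by
  have hpi := Real.pi_pos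
  have hD0 : (0:ℝ) < D := by linarith
  have key := key_ineq hE hE4 hD
  have mono : ∀ u v : ℝ, 0 ≤ u → u ≤ v → v ≤ D - 1 →
      Real.cot (π * (v + E) / D) ≤ Real.cot (π * (u + E) / D) := by
    intro u v hu huv hv
    apply cot_anti_le
    · positivity
    · apply div_le_div_of_nonneg_right _ hD0.le
      nlinarith
    · rw [div_lt_iff₀ hD0]
      nlinarith
  have h1 : Real.cot (π * (x + E) / D) ≤ Real.cot (π * (1 + E) / D) :=
    mono 1 x (by norm_num) hx hx'
  have h2 : Real.cot (π * (y + E) / D) ≤ Real.cot (π * (1 + E) / D) :=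
    mono 1 y (by norm_num) hy hy'
  have h3 : Real.cot (π * ((D - 1) + E) / D) ≤ Real.cot (π * (z + E) / D) :=
    mono z (D - 1) hz hz' le_rfl
  linarith

theorem alpha_lemma (m d : ℤ) (hm : 2 ≤ m) (hd : 2 ≤ d) (k l p : ℤ)
    (hk : 0 < k) (hk' : k < d) (hl : 0 < l) (hl' : l < d) (hp : 0 ≤ p) (hp' : p < d) :
    Real.cot (π * ((0 : ℝ) + 1 / (2 * (m : ℝ))) / (d : ℝ)) +
      Real.cot (π * ((p : ℝ) + 1 / (2 * (m : ℝ))) / (d : ℝ)) >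
    Real.cot (π * ((k : ℝ) + 1 / (2 * (m : ℝ))) / (d : ℝ)) +
      Real.cot (π * ((l : ℝ) + 1 / (2 * (m : ℝ))) / (d : ℝ)) := by
  have hm' : (2:ℝ) ≤ (m:ℝ) := by exact_mod_cast hm
  have hE : 0 < 1 / (2 * (m:ℝ)) := by positivity
  have hE4 : 1 / (2 * (m:ℝ)) ≤ 1/4 := by
    rw [div_le_div_iff₀ (by linarith) (by norm_num)]
    linarith
  apply main_aux hE hE4
  · exact_mod_cast hd
  · exact_mod_cast hk
  · have h : (k:ℝ) ≤ ((d - 1 : ℤ) : ℝ) := by exact_mod_cast by omega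
    push_cast at h; linarith
  · exact_mod_cast hl
  · have h : (l:ℝ) ≤ ((d - 1 : ℤ) : ℝ) := by exact_mod_cast by omega
    push_cast at h; linarith
  · exact_mod_cast hp
  · have h : (p:ℝ) ≤ ((d - 1 : ℤ) : ℝ) := by exact_mod_cast by omega
    push_cast at h; linarith
end

section
/- Let m ≥ 2 and d ≥ 2 be integers, and for k an integer modulo d define α̂_k = cot(π(k + 1/(2m))/d) where k is taken as its representative in {0,...,d-1}. Then the maximum over all x ∈ {0,...,d-1} of max over y ∈ {0,...,d-1} of (α̂_y + α̂_{(-1 - x - y) mod d}) equals α̂_0 + α̂_{(d-1-x) mod d}. -/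
open Real

private lemma cot_add_cot {u v : ℝ} (hu : Real.sin u ≠ 0) (hv : Real.sin v ≠ 0) :
    Real.cot u + Real.cot v = Real.sin (u + v) / (Real.sin u * Real.sin v) := by
  rw [Real.cot_eq_cos_div_sin, Real.cot_eq_cos_div_sin, Real.sin_add]
  field_simp
  ring

private lemma key_ineq_s3 (d : ℤ) (hd : 2 ≤ d) (c : ℝ) (hc0 : 0 < c) (hc1 : c < 1/2)
    (a b s : ℤ) (ha : 0 ≤ a) (hb : 0 ≤ b) (ha' : a ≤ d - 1) (hb' : b ≤ d - 1)
    (hs : 0 ≤ s) (hs' : s ≤ d - 1) (hab : a + b = s ∨ a + b = s + d) :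
    Real.cot (π * ((a : ℝ) + c) / d) + Real.cot (π * ((b : ℝ) + c) / d) ≤
      Real.cot (π * ((0 : ℝ) + c) / d) + Real.cot (π * ((s : ℝ) + c) / d) := by
  have hd' : (2:ℝ) ≤ (d:ℝ) := by exact_mod_cast hd
  have hdpos : (0:ℝ) < d := by linarith
  have hπ := Real.pi_pos
  have hsinpos : ∀ t : ℝ, 0 ≤ t → t ≤ (d:ℝ) - 1 → 0 < Real.sin (π * (t + c) / d) := by
    intro t ht ht'
    apply Real.sin_pos_of_pos_of_lt_pi
    · exact div_pos (mul_pos hπ (by linarith)) hdpos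
    · rw [div_lt_iff₀ hdpos]
      nlinarith [mul_pos hπ (show (0:ℝ) < d - t - c by linarith)]
  have haR : (0:ℝ) ≤ (a:ℝ) := by exact_mod_cast ha
  have hbR : (0:ℝ) ≤ (b:ℝ) := by exact_mod_cast hb
  have hsR : (0:ℝ) ≤ (s:ℝ) := by exact_mod_cast hs
  have haR' : (a:ℝ) ≤ (d:ℝ) - 1 := by exact_mod_cast ha'
  have hbR' : (b:ℝ) ≤ (d:ℝ) - 1 := by exact_mod_cast hb'
  have hsR' : (s:ℝ) ≤ (d:ℝ) - 1 := by exact_mod_cast hs'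
  have hsa := hsinpos (a:ℝ) haR haR'
  have hsb := hsinpos (b:ℝ) hbR hbR'
  have hs0 := hsinpos 0 le_rfl (by linarith)
  have hss := hsinpos (s:ℝ) hsR hsR'
  rw [cot_add_cot hsa.ne' hsb.ne', cot_add_cot hs0.ne' hss.ne']
  have hsum0 : π * ((0:ℝ) + c) / d + π * ((s:ℝ) + c) / d = π * ((s:ℝ) + 2*c) / d := by
    ring
  have hw : 0 < Real.sin (π * ((s:ℝ) + 2*c) / d) := by
    apply Real.sin_pos_of_pos_of_lt_pi
    · exact div_pos (mul_pos hπ (by linarith)) hdpos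
    · rw [div_lt_iff₀ hdpos]
      nlinarith [mul_pos hπ (show (0:ℝ) < d - s - 2*c by linarith)]
  rcases hab with h | h
  · have hcast : (a:ℝ) + b = s := by exact_mod_cast h
    have hsum : π * ((a:ℝ) + c) / d + π * ((b:ℝ) + c) / d = π * ((s:ℝ) + 2*c) / d := by
      rw [← hcast]; ring
    rw [hsum, hsum0]
    have pe : ∀ u v : ℝ, Real.sin u * Real.sin v
        = (Real.cos (u - v) - Real.cos (u + v)) / 2 := by
      intro u v; rw [Real.cos_sub, Real.cos_add]; ring
    have hprod : Real.sin (π * ((0:ℝ) + c) / d) * Real.sin (π * ((s:ℝ) + c) / d)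
        ≤ Real.sin (π * ((a:ℝ) + c) / d) * Real.sin (π * ((b:ℝ) + c) / d) := by
      rw [pe, pe, hsum, hsum0]
      have h1 : π * ((0:ℝ) + c) / d - π * ((s:ℝ) + c) / d = -(π * s / d) := by ring
      have h2 : π * ((a:ℝ) + c) / d - π * ((b:ℝ) + c) / d = π * ((a:ℝ) - b) / d := by ring
      rw [h1, h2, Real.cos_neg, ← Real.cos_abs (π * ((a:ℝ) - b) / d)]
      have habs : |π * ((a:ℝ) - b) / d| = π * |(a:ℝ) - b| / d := by
        rw [abs_div, abs_mul, abs_of_pos hπ, abs_of_pos hdpos]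
      have habd : |(a:ℝ) - b| ≤ s := by
        rw [abs_le]; constructor <;> linarith
      have hle : |π * ((a:ℝ) - b) / d| ≤ π * s / d := by
        rw [habs]
        gcongr
      have hsp : π * (s:ℝ) / d ≤ π := by
        rw [div_le_iff₀ hdpos]
        nlinarith
      have := Real.cos_le_cos_of_nonneg_of_le_pi (abs_nonneg _) hsp hle
      linarith
    exact div_le_div_of_nonneg_left hw.le (mul_pos hs0 hss) hprod
  · have hcast : (a:ℝ) + b = (s:ℝ) + d := by exact_mod_cast h
    have hsum : π * ((a:ℝ) + c) / d + π * ((b:ℝ) + c) / d = π * ((s:ℝ) + 2*c) / d + π := by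
      field_simp
      linear_combination hcast
    rw [hsum, hsum0, Real.sin_add_pi]
    have h1 : -Real.sin (π * ((s:ℝ) + 2*c) / d)
        / (Real.sin (π * ((a:ℝ) + c) / d) * Real.sin (π * ((b:ℝ) + c) / d)) ≤ 0 :=
      div_nonpos_of_nonpos_of_nonneg (by linarith) (mul_pos hsa hsb).le
    have h2 : 0 ≤ Real.sin (π * ((s:ℝ) + 2*c) / d)
        / (Real.sin (π * ((0:ℝ) + c) / d) * Real.sin (π * ((s:ℝ) + c) / d)) :=
      (div_pos hw (mul_pos hs0 hss)).le
    linarith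


theorem h_max (m d : ℤ) (hm : 2 ≤ m) (hd : 2 ≤ d)
    (α : ℤ → ℝ)
    (hα : ∀ k : ℤ, α k = Real.cot (π * (((k % d : ℤ) : ℝ) + 1 / (2 * (m : ℝ))) / (d : ℝ)))
    (hne : (Finset.Icc (0 : ℤ) (d - 1)).Nonempty)
    (x : ℤ) (hx : x ∈ Finset.Icc (0 : ℤ) (d - 1)) :
    (Finset.Icc (0 : ℤ) (d - 1)).sup' hne (fun y => α y + α (-1 - x - y)) =
      α 0 + α (d - 1 - x) := by
  have hmR : (2:ℝ) ≤ (m:ℝ) := by exact_mod_cast hm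
  set c : ℝ := 1 / (2 * (m:ℝ)) with hc
  have hc0 : 0 < c := by rw [hc]; exact div_pos one_pos (by linarith)
  have hc1 : c < 1/2 := by
    rw [hc, div_lt_div_iff₀ (by linarith) (by norm_num)]
    linarith
  have hd0 : d ≠ 0 := by omega
  rw [Finset.mem_Icc] at hx
  have hsmod : (d - 1 - x) % d = d - 1 - x := Int.emod_eq_of_lt (by omega) (by omega)
  have hneg : (-1 - x) % d = (d - 1 - x) % d := by
    conv_lhs => rw [show (-1 - x) = (d - 1 - x) + d * (-1) by ring]
    rw [Int.add_mul_emod_self_left]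
  apply le_antisymm
  · apply Finset.sup'_le
    intro y hy
    rw [hα y, hα (-1 - x - y), hα 0, hα (d - 1 - x), Int.zero_emod, hsmod]
    set a := y % d with hadef
    set b := (-1 - x - y) % d with hbdef
    have ha : 0 ≤ a := Int.emod_nonneg y hd0
    have hb : 0 ≤ b := Int.emod_nonneg _ hd0
    have ha' : a ≤ d - 1 := by have := Int.emod_lt_of_pos y (show 0 < d by omega); omega
    have hb' : b ≤ d - 1 := by have := Int.emod_lt_of_pos (-1 - x - y) (show 0 < d by omega); omega
    have hab : a + b = (d - 1 - x) ∨ a + b = (d - 1 - x) + d := by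
      have hmod : (a + b) % d = (d - 1 - x) % d := by
        rw [hadef, hbdef, ← Int.add_emod]
        conv_lhs => rw [show y + (-1 - x - y) = (d - 1 - x) + d * (-1) by ring]
        rw [Int.add_mul_emod_self_left]
      rw [Int.emod_eq_emod_iff_emod_sub_eq_zero] at hmod
      obtain ⟨k, hk⟩ := Int.dvd_of_emod_eq_zero hmod
      have hk0 : 0 ≤ k := by
        by_contra hkk
        push_neg at hkk
        have h1 : d * k ≤ d * (-1) :=
          mul_le_mul_of_nonneg_left (by omega) (by omega)
        omega
      have hk1 : k ≤ 1 := by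
        by_contra hkk
        push_neg at hkk
        have h1 : d * 2 ≤ d * k :=
          mul_le_mul_of_nonneg_left (by omega) (by omega)
        omega
      have : k = 0 ∨ k = 1 := by omega
      rcases this with rfl | rfl
      · left; omega
      · right; omega
    have := key_ineq_s3 d hd c hc0 hc1 a b (d - 1 - x) ha hb ha' hb' (by omega) (by omega) hab
    convert this using 4 <;> push_cast <;> rfl
  · have h0mem : (0:ℤ) ∈ Finset.Icc (0:ℤ) (d - 1) := by
      rw [Finset.mem_Icc]; omega
    have hle := Finset.le_sup' (fun y => α y + α (-1 - x - y)) h0mem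
    have heq : α (-1 - x - 0) = α (d - 1 - x) := by
      rw [hα, hα]
      rw [show (-1 - x - 0) = -1 - x by ring, hneg]
    rw [heq] at hle
    exact hle
end

section
/- Let m ≥ 2 and d ≥ 2 be integers and α̂_k = cot(π(k + 1/(2m))/d) for integers 0 ≤ k < d. Then the maximum over all (q₁,...,q_{2m-1}) ∈ {0,...,d-1}^{2m-1} of the sum ∑_{i=1}^{2m-1} α̂_{q_i} + α̂_{(-1 - ∑_{i=1}^{2m-1} q_i) mod d} equals (2m - 1)·α̂_0 + α̂_{d-1}. -/
open Real

private lemma sin_mul_sin' (X Y : ℝ) :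
    Real.sin X * Real.sin Y = (Real.cos (Y - X) - Real.cos (X + Y)) / 2 := by
  rw [Real.cos_sub, Real.cos_add]; ring

private lemma cot_sub_cot' {x y : ℝ} (hx : Real.sin x ≠ 0) (hy : Real.sin y ≠ 0) :
    Real.cot x - Real.cot y = Real.sin (y - x) / (Real.sin x * Real.sin y) := by
  rw [Real.cot_eq_cos_div_sin, Real.cot_eq_cos_div_sin, Real.sin_sub]
  field_simp

private lemma angle_mem {s d t : ℝ} (hs : 0 < s) (hs2 : 2 * s ≤ 1) (hd : 2 ≤ d)
    (ht0 : 0 ≤ t) (ht1 : t ≤ d - 1) :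
    0 < π * (t + s) / d ∧ π * (t + s) / d < π := by
  have hπ := Real.pi_pos
  have hd0 : (0:ℝ) < d := by linarith
  constructor
  · exact div_pos (mul_pos hπ (by linarith)) hd0
  · rw [div_lt_iff₀ hd0]
    exact mul_lt_mul_of_pos_left (by linarith) hπ

private lemma cot_mono' {s d : ℝ} (hs : 0 < s) (hs2 : 2 * s ≤ 1) (hd : 2 ≤ d)
    {a b : ℝ} (ha : 0 ≤ a) (hab : a ≤ b) (hb : b ≤ d - 1) :
    Real.cot (π * (b + s) / d) ≤ Real.cot (π * (a + s) / d) := by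
  have hπ := Real.pi_pos
  have hd0 : (0:ℝ) < d := by linarith
  obtain ⟨hx0, hxπ⟩ := angle_mem hs hs2 hd ha (by linarith)
  obtain ⟨hy0, hyπ⟩ := angle_mem hs hs2 hd (by linarith : (0:ℝ) ≤ b) hb
  have hsx : 0 < Real.sin (π * (a + s) / d) := Real.sin_pos_of_pos_of_lt_pi hx0 hxπ
  have hsy : 0 < Real.sin (π * (b + s) / d) := Real.sin_pos_of_pos_of_lt_pi hy0 hyπ
  have hxy : π * (a + s) / d ≤ π * (b + s) / d := by gcongr
  have hdiff := cot_sub_cot' (ne_of_gt hsx) (ne_of_gt hsy)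
  have hnn : 0 ≤ Real.sin (π * (b + s) / d - π * (a + s) / d) := by
    apply Real.sin_nonneg_of_nonneg_of_le_pi (by linarith) (by linarith)
  have : 0 ≤ Real.sin (π * (b + s) / d - π * (a + s) / d) /
      (Real.sin (π * (a + s) / d) * Real.sin (π * (b + s) / d)) :=
    div_nonneg hnn (le_of_lt (mul_pos hsx hsy))
  linarith

set_option maxHeartbeats 1000000 in
private lemma cot_superadd' {s d : ℝ} (hs : 0 < s) (hs2 : 2 * s ≤ 1) (hd : 2 ≤ d)
    {a b : ℝ} (ha : 0 ≤ a) (hb : 0 ≤ b) (hab : a + b ≤ d - 1) :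
    Real.cot (π * (a + s) / d) + Real.cot (π * (b + s) / d) ≤
      Real.cot (π * (0 + s) / d) + Real.cot (π * ((a + b) + s) / d) := by
  have hπ := Real.pi_pos
  have hd0 : (0:ℝ) < d := by linarith
  have hdne : (d:ℝ) ≠ 0 := ne_of_gt hd0
  obtain ⟨h00, h0π⟩ := angle_mem hs hs2 hd (le_refl 0) (by linarith)
  obtain ⟨ha0, haπ⟩ := angle_mem hs hs2 hd ha (by linarith)
  obtain ⟨hb0, hbπ⟩ := angle_mem hs hs2 hd hb (by linarith)
  obtain ⟨hab0, habπ⟩ := angle_mem hs hs2 hd (by linarith : (0:ℝ) ≤ a + b) hab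
  have s0 : 0 < Real.sin (π * (0 + s) / d) := Real.sin_pos_of_pos_of_lt_pi h00 h0π
  have sa : 0 < Real.sin (π * (a + s) / d) := Real.sin_pos_of_pos_of_lt_pi ha0 haπ
  have sb : 0 < Real.sin (π * (b + s) / d) := Real.sin_pos_of_pos_of_lt_pi hb0 hbπ
  have sab : 0 < Real.sin (π * ((a + b) + s) / d) := Real.sin_pos_of_pos_of_lt_pi hab0 habπ
  -- products inequality
  have hprod : Real.sin (π * (0 + s) / d) * Real.sin (π * (b + s) / d) ≤
      Real.sin (π * (a + s) / d) * Real.sin (π * ((a + b) + s) / d) := by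
    rw [sin_mul_sin', sin_mul_sin']
    have e1 : π * (b + s) / d - π * (0 + s) / d = π * b / d := by field_simp; ring
    have e2 : π * ((a + b) + s) / d - π * (a + s) / d = π * b / d := by field_simp; ring
    rw [e1, e2]
    have hkey : Real.cos (π * (a + s) / d + π * ((a + b) + s) / d) ≤
        Real.cos (π * (0 + s) / d + π * (b + s) / d) := by
      have h := Real.cos_sub_cos (π * (0 + s) / d + π * (b + s) / d)
        (π * (a + s) / d + π * ((a + b) + s) / d)
      have e3 : ((π * (0 + s) / d + π * (b + s) / d) +
          (π * (a + s) / d + π * ((a + b) + s) / d)) / 2 = π * (a + b + 2 * s) / d := by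
        field_simp; ring
      have e4 : ((π * (0 + s) / d + π * (b + s) / d) -
          (π * (a + s) / d + π * ((a + b) + s) / d)) / 2 = -(π * a / d) := by
        field_simp; ring
      rw [e3, e4, Real.sin_neg] at h
      have s1 : 0 ≤ Real.sin (π * (a + b + 2 * s) / d) := by
        apply Real.sin_nonneg_of_nonneg_of_le_pi
        · exact div_nonneg (mul_nonneg hπ.le (by linarith)) hd0.le
        · rw [div_le_iff₀ hd0]
          exact mul_le_mul_of_nonneg_left (by linarith) hπ.le
      have s2 : 0 ≤ Real.sin (π * a / d) := by
        apply Real.sin_nonneg_of_nonneg_of_le_pi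
        · exact div_nonneg (mul_nonneg hπ.le (by linarith)) hd0.le
        · rw [div_le_iff₀ hd0]
          exact mul_le_mul_of_nonneg_left (by linarith) hπ.le
      nlinarith [mul_nonneg s1 s2]
    linarith
  have hdiff1 := cot_sub_cot' (ne_of_gt sa) (ne_of_gt sab)
  have hdiff2 := cot_sub_cot' (ne_of_gt s0) (ne_of_gt sb)
  have e1 : π * ((a + b) + s) / d - π * (a + s) / d = π * b / d := by field_simp; ring
  have e2 : π * (b + s) / d - π * (0 + s) / d = π * b / d := by field_simp; ring
  rw [e1] at hdiff1
  rw [e2] at hdiff2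
  have hsinb : 0 ≤ Real.sin (π * b / d) := by
    apply Real.sin_nonneg_of_nonneg_of_le_pi
    · exact div_nonneg (mul_nonneg hπ.le (by linarith)) hd0.le
    · rw [div_le_iff₀ hd0]
      exact mul_le_mul_of_nonneg_left (by linarith) hπ.le
  have hq : Real.sin (π * b / d) / (Real.sin (π * (a + s) / d) * Real.sin (π * ((a + b) + s) / d))
      ≤ Real.sin (π * b / d) / (Real.sin (π * (0 + s) / d) * Real.sin (π * (b + s) / d)) := by
    gcongr
  linarith

private lemma gsum' (D : ℤ) (hD : 2 ≤ D) (g : ℤ → ℝ) (hg0 : g 0 = 0)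
    (hgmin : ∀ a b : ℤ, 0 ≤ a → a ≤ D - 1 → 0 ≤ b → b ≤ D - 1 →
      g (min (a + b) (D - 1)) ≤ g a + g b) :
    ∀ n (q : Fin n → ℤ), (∀ i, 0 ≤ q i ∧ q i ≤ D - 1) →
      g (min (∑ i, q i) (D - 1)) ≤ ∑ i, g (q i) := by
  intro n
  induction n with
  | zero =>
    intro q hq
    simp only [Finset.univ_eq_empty, Finset.sum_empty]
    rw [min_eq_left (by omega)]
    simp [hg0]
  | succ n ih =>
    intro q hq
    rw [Fin.sum_univ_castSucc (f := fun i => q i), Fin.sum_univ_castSucc (f := fun i => g (q i))]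
    set S := ∑ i : Fin n, q i.castSucc with hS
    have hS0 : 0 ≤ S := Finset.sum_nonneg fun i _ => (hq i.castSucc).1
    have hql := hq (Fin.last n)
    have e : min (S + q (Fin.last n)) (D - 1) = min (min S (D - 1) + q (Fin.last n)) (D - 1) := by
      omega
    rw [e]
    have h1 : g (min (min S (D - 1) + q (Fin.last n)) (D - 1)) ≤
        g (min S (D - 1)) + g (q (Fin.last n)) :=
      hgmin _ _ (by omega) (by omega) hql.1 hql.2
    have h2 : g (min S (D - 1)) ≤ ∑ i : Fin n, g (q i.castSucc) :=
      ih (fun i => q i.castSucc) (fun i => hq i.castSucc)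
    linarith

theorem classical_bound (m d : ℕ) (hm : 2 ≤ m) (hd : 2 ≤ d)
    (α : ℤ → ℝ)
    (hα : ∀ k : ℤ, α k = Real.cot (π * (((k % (d : ℤ) : ℤ) : ℝ) + 1 / (2 * (m : ℝ))) / (d : ℝ))) :
    IsGreatest
      {v : ℝ | ∃ q : Fin (2 * m - 1) → ℤ,
        (∀ i, q i ∈ Finset.Icc (0 : ℤ) ((d : ℤ) - 1)) ∧
        v = (∑ i, α (q i)) + α (-1 - ∑ i, q i)}
      ((2 * (m : ℝ) - 1) * α 0 + α ((d : ℤ) - 1)) := by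
  set s : ℝ := 1 / (2 * (m : ℝ)) with hs_def
  set D : ℤ := (d : ℤ) with hD_def
  have hm0 : (0:ℝ) < m := by positivity
  have hs : 0 < s := by positivity
  have hs2 : 2 * s ≤ 1 := by
    have h1 : (1:ℝ) ≤ (m:ℝ) := by exact_mod_cast (by omega : 1 ≤ m)
    rw [hs_def, mul_one_div, div_le_one (by positivity)]
    linarith
  have hdR : (2:ℝ) ≤ (d:ℝ) := by exact_mod_cast hd
  have hDD : 2 ≤ D := by rw [hD_def]; exact_mod_cast hd
  -- mod facts
  have hmodself : ∀ k : ℤ, 0 ≤ k → k ≤ D - 1 → k % D = k := by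
    intro k h1 h2
    exact Int.emod_eq_of_lt h1 (by omega)
  have hmod : ∀ k : ℤ, α k = α (k % D) := by
    intro k
    rw [hα, hα, Int.emod_emod_of_dvd _ dvd_rfl]
  have hαval : ∀ k : ℤ, 0 ≤ k → k ≤ D - 1 →
      α k = Real.cot (π * ((k : ℝ) + s) / d) := by
    intro k h1 h2
    rw [hα, hmodself k h1 h2]
  -- monotonicity and superadditivity for α
  have hαmono : ∀ a b : ℤ, 0 ≤ a → a ≤ b → b ≤ D - 1 → α b ≤ α a := by
    intro a b h1 h2 h3
    rw [hαval a h1 (by omega), hαval b (by omega) h3]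
    apply cot_mono' hs hs2 hdR (by exact_mod_cast h1) (by exact_mod_cast h2)
    have : (b:ℝ) ≤ (D:ℝ) - 1 := by exact_mod_cast h3
    simpa [hD_def] using this
  have hαsuper : ∀ a b : ℤ, 0 ≤ a → 0 ≤ b → a + b ≤ D - 1 →
      α a + α b ≤ α 0 + α (a + b) := by
    intro a b h1 h2 h3
    rw [hαval a h1 (by omega), hαval b h2 (by omega), hαval 0 le_rfl (by omega),
      hαval (a + b) (by omega) h3]
    have := cot_superadd' hs hs2 hdR (a := (a:ℝ)) (b := (b:ℝ))
      (by exact_mod_cast h1) (by exact_mod_cast h2)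
      (by rw [hD_def] at h3; exact_mod_cast h3)
    convert this using 4 <;> push_cast <;> ring
  set g : ℤ → ℝ := fun k => α 0 - α k with hg_def
  have hg0 : g 0 = 0 := by simp [hg_def]
  have hgmin : ∀ a b : ℤ, 0 ≤ a → a ≤ D - 1 → 0 ≤ b → b ≤ D - 1 →
      g (min (a + b) (D - 1)) ≤ g a + g b := by
    intro a b h1 h2 h3 h4
    by_cases h : a + b ≤ D - 1
    · rw [min_eq_left h]
      have := hαsuper a b h1 h3 h
      simp only [hg_def]
      linarith
    · rw [min_eq_right (by omega)]
      have h5 : α a + α (D - 1 - a) ≤ α 0 + α (D - 1) := by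
        have := hαsuper a (D - 1 - a) h1 (by omega) (by omega)
        convert this using 3
        ring
      have h6 : α b ≤ α (D - 1 - a) := hαmono _ _ (by omega) (by omega) h4
      simp only [hg_def]
      linarith
  -- the (-1) mod fact
  have hneg1 : (-1 : ℤ) % D = D - 1 := by
    have h := Int.add_mul_emod_self_left (a := (-1:ℤ)) (b := D) (c := 1)
    rw [show (-1:ℤ) + D * 1 = D - 1 by ring] at h
    rw [← h]
    exact hmodself _ (by omega) (by omega)
  constructor
  · -- membership
    refine ⟨fun _ => 0, fun i => by simp only [Finset.mem_Icc]; omega, ?_⟩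
    have h1 : α (-1 - ∑ _i : Fin (2 * m - 1), (0:ℤ)) = α (D - 1) := by
      simp only [Finset.sum_const, smul_zero, sub_zero]
      rw [hmod (-1), hneg1]
    rw [h1]
    congr 1
    rw [Finset.sum_const, Finset.card_univ, Fintype.card_fin, nsmul_eq_mul]
    congr 1
    push_cast [Nat.cast_sub (by omega : 1 ≤ 2 * m)]
    ring
  · -- upper bound
    rintro v ⟨q, hq, rfl⟩
    have hq' : ∀ i, 0 ≤ q i ∧ q i ≤ D - 1 := by
      intro i
      have := hq i
      rw [Finset.mem_Icc] at this
      exact this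
    set S := ∑ i, q i with hSdef
    have hS0 : 0 ≤ S := Finset.sum_nonneg fun i _ => (hq' i).1
    set r : ℤ := (-1 - S) % D with hr_def
    have hr0 : 0 ≤ r := Int.emod_nonneg _ (by omega)
    have hr1 : r ≤ D - 1 := by
      have := Int.emod_lt_of_pos (-1 - S) (by omega : (0:ℤ) < D)
      omega
    have hαr : α (-1 - S) = α r := hmod _
    -- (S + r) % D = D - 1
    have hsum_mod : (S + r) % D = D - 1 := by
      rw [hr_def]
      rw [Int.add_emod, Int.emod_emod_of_dvd _ dvd_rfl, ← Int.add_emod]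
      have : S + (-1 - S) = -1 := by ring
      rw [this, hneg1]
    have hSr : D - 1 ≤ S + r := by
      have h1 := Int.mul_ediv_add_emod (S + r) D
      have h2 : 0 ≤ (S + r) / D := Int.ediv_nonneg (by omega) (by omega)
      nlinarith [h1, hsum_mod, h2]
    -- apply gsum
    have hgsum := gsum' D hDD g hg0 hgmin _ q hq'
    have hkey : g (min (min S (D - 1) + r) (D - 1)) ≤ g (min S (D - 1)) + g r :=
      hgmin _ _ (by omega) (by omega) hr0 hr1
    have hmin_eq : min (min S (D - 1) + r) (D - 1) = D - 1 := by omega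
    rw [hmin_eq] at hkey
    have hsum_g : ∑ i, g (q i) = (↑(2 * m - 1) : ℝ) * α 0 - ∑ i, α (q i) := by
      simp only [hg_def]
      rw [Finset.sum_sub_distrib, Finset.sum_const, Finset.card_univ, Fintype.card_fin,
        nsmul_eq_mul]
    have hcast : ((2 * m - 1 : ℕ) : ℝ) = 2 * (m:ℝ) - 1 := by
      push_cast [Nat.cast_sub (by omega : 1 ≤ 2 * m)]
      ring
    have hgD : g (D - 1) = α 0 - α (D - 1) := by simp [hg_def]
    rw [hαr]
    have : g r = α 0 - α r := by simp [hg_def]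
    rw [hsum_g, hcast] at hgsum
    linarith [hgsum, hkey, hgD, this]
end

section
/- For all integers m ≥ 2 and d ≥ 2, tan(π/(2m))·cot(π/(2dm)) > d. -/
open Real

lemma aux_ne_odd {x : ℝ} (h0 : 0 ≤ x) (h : x < π / 2) :
    ∀ k : ℤ, x ≠ (2 * k + 1) * π / 2 := by
  intro k hk
  have hπ := Real.pi_pos
  rcases le_or_gt 0 k with hk0 | hk0
  · have : (1 : ℝ) ≤ 2 * (k : ℝ) + 1 := by
      have : (0:ℝ) ≤ (k:ℝ) := by exact_mod_cast hk0
      linarith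
    nlinarith
  · have hk1' : k ≤ -1 := by omega
    have hk1 : (k : ℝ) ≤ -1 := by exact_mod_cast hk1'
    nlinarith

lemma aux_tan_add_gt {x y : ℝ} (hx : 0 < x) (hy : 0 < y) (hxy : x + y < π / 2) :
    Real.tan x + Real.tan y < Real.tan (x + y) := by
  have hπ := Real.pi_pos
  have hx2 : x < π / 2 := by linarith
  have hy2 : y < π / 2 := by linarith
  have htx : 0 < Real.tan x := Real.tan_pos_of_pos_of_lt_pi_div_two hx hx2
  have hty : 0 < Real.tan y := Real.tan_pos_of_pos_of_lt_pi_div_two hy hy2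
  have hmul : Real.tan x * Real.tan y < 1 := by
    have hlt : x < π / 2 - y := by linarith
    have h1 : Real.tan x < Real.tan (π / 2 - y) :=
      Real.tan_lt_tan_of_nonneg_of_lt_pi_div_two hx.le (by linarith) hlt
    rw [Real.tan_pi_div_two_sub] at h1
    calc Real.tan x * Real.tan y < (Real.tan y)⁻¹ * Real.tan y := by
          exact mul_lt_mul_of_pos_right h1 hty
      _ = 1 := inv_mul_cancel₀ hty.ne'
  have hadd : Real.tan (x + y) = (Real.tan x + Real.tan y) / (1 - Real.tan x * Real.tan y) :=
    Real.tan_add' ⟨aux_ne_odd hx.le hx2, aux_ne_odd hy.le hy2⟩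
  rw [hadd]
  have hden : 0 < 1 - Real.tan x * Real.tan y := by linarith
  have hden1 : 1 - Real.tan x * Real.tan y < 1 := by nlinarith
  rw [lt_div_iff₀ hden]
  nlinarith

lemma aux_tan_nsmul {x : ℝ} (hx : 0 < x) :
    ∀ n : ℕ, 1 ≤ n → (n : ℝ) * x < π / 2 → (n : ℝ) * Real.tan x ≤ Real.tan ((n : ℝ) * x) := by
  intro n
  induction n with
  | zero => intro h; omega
  | succ k ih =>
    intro _ hlt
    rcases Nat.eq_zero_or_pos k with hk0 | hk1
    · subst hk0; simp
    · have hkx : (0:ℝ) < (k : ℝ) * x := by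
        have : (1:ℝ) ≤ (k:ℝ) := by exact_mod_cast hk1
        nlinarith
      have hsum : (k : ℝ) * x + x < π / 2 := by push_cast at hlt ⊢; linarith
      have h1 := aux_tan_add_gt hkx hx hsum
      have h2 := ih hk1 (by linarith)
      have : ((k:ℕ):ℝ) * x + x = ((k+1 : ℕ) : ℝ) * x := by push_cast; ring
      rw [← this]
      push_cast
      nlinarith [h1, h2]

theorem ns_gt_quantum (m d : ℕ) (hm : 2 ≤ m) (hd : 2 ≤ d) :
    Real.tan (π / (2 * (m : ℝ))) * Real.cot (π / (2 * (d : ℝ) * (m : ℝ))) > (d : ℝ) := by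
  have hπ := Real.pi_pos
  have hm1 : (2:ℝ) ≤ (m:ℝ) := by exact_mod_cast hm
  have hd1 : (2:ℝ) ≤ (d:ℝ) := by exact_mod_cast hd
  set x : ℝ := π / (2 * (d:ℝ) * (m:ℝ)) with hxdef
  have hxpos : 0 < x := by
    apply div_pos hπ
    nlinarith
  have hdx : (d:ℝ) * x = π / (2 * (m:ℝ)) := by
    rw [hxdef]; field_simp
  have hdx2 : (d:ℝ) * x < π / 2 := by
    rw [hdx]
    rw [div_lt_div_iff₀ (by nlinarith) (by norm_num)]
    nlinarith
  have hx2 : x < π / 2 := by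
    have hdx0 : x < (d:ℝ) * x := by nlinarith
    linarith
  have htx : 0 < Real.tan x := Real.tan_pos_of_pos_of_lt_pi_div_two hxpos hx2
  -- main inequality: tan (d x) > d * tan x
  have hmain : (d:ℝ) * Real.tan x < Real.tan ((d:ℝ) * x) := by
    have hk1 : 1 ≤ d - 1 := by omega
    have hcast : ((d - 1 : ℕ) : ℝ) = (d:ℝ) - 1 := by
      have : (1:ℕ) ≤ d := by omega
      push_cast [Nat.cast_sub this]; ring
    have hkx : (0:ℝ) < ((d-1:ℕ):ℝ) * x := by rw [hcast]; nlinarith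
    have hsplit : (d:ℝ) * x = ((d-1:ℕ):ℝ) * x + x := by rw [hcast]; ring
    have hsum : ((d-1:ℕ):ℝ) * x + x < π / 2 := by rw [← hsplit]; exact hdx2
    have h1 := aux_tan_add_gt hkx hxpos (by linarith [hsum])
    have h2 := aux_tan_nsmul hxpos (d-1) hk1 (by nlinarith [hsum, htx])
    rw [hsplit]
    have : ((d-1:ℕ):ℝ) * Real.tan x + Real.tan x = (d:ℝ) * Real.tan x := by
      rw [hcast]; ring
    calc (d:ℝ) * Real.tan x = ((d-1:ℕ):ℝ) * Real.tan x + Real.tan x := this.symm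
      _ ≤ Real.tan (((d-1:ℕ):ℝ) * x) + Real.tan x := by linarith
      _ < Real.tan (((d-1:ℕ):ℝ) * x + x) := h1
  -- cot x = (tan x)⁻¹
  have hcot : Real.cot x = (Real.tan x)⁻¹ := by
    rw [Real.cot_eq_cos_div_sin, Real.tan_eq_sin_div_cos, inv_div]
  rw [← hdx, hcot, gt_iff_lt, ← div_eq_mul_inv, lt_div_iff₀ htx]
  exact hmain
end

section
/- For all real a with 0 < a ≤ 1/2 and real x with 0 < x ≤ π/4, one has a·(x − π)·cot(a·x) + π·cot(x) > 0. -/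
open Real

lemma key_mono (x : ℝ) (hx : 0 ≤ x) (hx' : x ≤ π / 4) :
    Real.sin x * (1 - 2/5 * x ^ 2) ≤ x * Real.cos x := by
  set f : ℝ → ℝ := fun t => t * Real.cos t - Real.sin t + 2/5 * t ^ 2 * Real.sin t with hf
  have hderiv : ∀ t : ℝ, HasDerivAt f (t / 5 * (2 * t * Real.cos t - Real.sin t)) t := by
    intro t
    have h1 : HasDerivAt (fun t : ℝ => t * Real.cos t)
        (1 * Real.cos t + t * (-Real.sin t)) t :=
      (hasDerivAt_id t).mul (Real.hasDerivAt_cos t)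
    have h2 : HasDerivAt Real.sin (Real.cos t) t := Real.hasDerivAt_sin t
    have h3 : HasDerivAt (fun t : ℝ => 2/5 * t ^ 2 * Real.sin t)
        ((2/5 * (2 * t)) * Real.sin t + 2/5 * t ^ 2 * Real.cos t) t := by
      have : HasDerivAt (fun t : ℝ => 2/5 * t ^ 2) (2/5 * (2 * t)) t := by
        simpa using (hasDerivAt_pow 2 t).const_mul (2/5 : ℝ)
      exact this.mul (Real.hasDerivAt_sin t)
    have := (h1.sub h2).add h3
    exact this.congr_deriv (by ring)
  have hmono : MonotoneOn f (Set.Icc 0 (π / 4)) := by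
    apply monotoneOn_of_deriv_nonneg (convex_Icc _ _)
    · exact ((Continuous.mul continuous_id Real.continuous_cos).sub Real.continuous_sin
        |>.add ((continuous_const.mul (continuous_pow 2)).mul Real.continuous_sin)).continuousOn
    · intro t ht
      exact ((hderiv t).differentiableAt).differentiableWithinAt
    · intro t ht
      rw [interior_Icc] at ht
      rw [(hderiv t).deriv]
      have ht0 : 0 < t := ht.1
      have ht4 : t < π / 4 := ht.2
      have hcos : (1:ℝ) / 2 ≤ Real.cos t := by
        have h1 : 1 - t ^ 2 / 2 ≤ Real.cos t := Real.one_sub_sq_div_two_le_cos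
        nlinarith [Real.pi_lt_d2, sq_nonneg t, Real.pi_pos]
      have hsin : Real.sin t ≤ t := Real.sin_le ht0.le
      nlinarith [mul_le_mul_of_nonneg_left hcos (by linarith : (0:ℝ) ≤ 2*t)]
  have h0 : f 0 ≤ f x := by
    apply hmono ⟨le_refl 0, by positivity⟩ ⟨hx, hx'⟩ hx
  simp only [hf] at h0
  simp at h0
  nlinarith [h0]

theorem u_pos (a x : ℝ) (ha : 0 < a) (ha' : a ≤ 1 / 2) (hx : 0 < x) (hx' : x ≤ π / 4) :
    a * (x - π) * Real.cot (a * x) + π * Real.cot x > 0 := by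
  have hπ : 0 < π := Real.pi_pos
  have hx2 : x < π / 2 := lt_of_le_of_lt hx' (by linarith)
  have hsx : 0 < Real.sin x := Real.sin_pos_of_pos_of_lt_pi hx (by linarith)
  -- lower bound for cot x
  have hkey := key_mono x hx.le hx'
  have hcotx : (1 - 2/5 * x ^ 2) / x ≤ Real.cot x := by
    rw [Real.cot_eq_cos_div_sin, div_le_div_iff₀ hx hsx]
    nlinarith
  -- upper bound for cot (a x)
  set t := a * x with hT
  have ht0 : 0 < t := mul_pos ha hx
  have ht2 : t < π / 2 := by
    have : t ≤ x / 2 := by nlinarith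
    linarith
  have htan : t < Real.tan t := Real.lt_tan ht0 ht2
  have hst : 0 < Real.sin t := Real.sin_pos_of_pos_of_lt_pi ht0 (by linarith)
  have hct : 0 < Real.cos t := Real.cos_pos_of_mem_Ioo ⟨by linarith, ht2⟩
  have hcot_t : Real.cot t < 1 / t := by
    rw [Real.tan_eq_sin_div_cos, lt_div_iff₀ hct] at htan
    rw [Real.cot_eq_cos_div_sin, div_lt_div_iff₀ hst ht0]
    nlinarith
  have hcotpos : 0 < Real.cot t := by
    rw [Real.cot_eq_cos_div_sin]; positivity
  -- combine
  have h1 : a * (x - π) * Real.cot t > a * (x - π) * (1 / t) := by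
    apply mul_lt_mul_of_neg_left hcot_t
    nlinarith
  have h2 : a * (x - π) * (1 / t) = (x - π) / x := by
    rw [hT]; field_simp
  have h3 : π * Real.cot x ≥ π * ((1 - 2/5 * x ^ 2) / x) := by
    exact mul_le_mul_of_nonneg_left hcotx hπ.le
  have hfin : π * ((1 - 2/5 * x ^ 2) / x) + (x - π) / x > 0 := by
    have e : π * ((1 - 2/5 * x ^ 2) / x) + (x - π) / x
        = (π * (1 - 2/5 * x ^ 2) + (x - π)) / x := by ring
    rw [gt_iff_lt, e, lt_div_iff₀ hx]
    have hpi2 : π ^ 2 < 10 := by nlinarith [Real.pi_lt_d2]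
    nlinarith [mul_le_mul_of_nonneg_left hx' (mul_pos hπ hx).le,
      mul_lt_mul_of_pos_right hpi2 hx]
  calc a * (x - π) * Real.cot t + π * Real.cot x
      > a * (x - π) * (1 / t) + π * ((1 - 2/5 * x ^ 2) / x) := by
        exact add_lt_add_of_lt_of_le h1 h3
      _ > 0 := by rw [h2]; linarith [hfin]
end

section
/- For all real x with 0 < x ≤ π/4, one has 1 − π/x + π·cot(x) > 0. -/
open Real

theorem limit_u_pos (x : ℝ) (hx : 0 < x) (hx' : x ≤ π / 4) :
    1 - π / x + π * Real.cot x > 0 := by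
  have hpi3 : (3:ℝ) < π := Real.pi_gt_three
  have hpi0 : (0:ℝ) < π := by linarith
  have hcotq : Real.cot (π/4) = 1 := by
    rw [Real.cot_eq_cos_div_sin, Real.cos_pi_div_four, Real.sin_pi_div_four]
    norm_num
  have key : Real.cot x - 1/x ≥ Real.cot (π/4) - 1/(π/4) := by
    rcases eq_or_lt_of_le hx' with h | h
    · rw [h]
    · have hanti : StrictAntiOn (fun t : ℝ => Real.cot t - 1/t) (Set.Icc x (π/4)) := by
        apply strictAntiOn_of_deriv_neg (convex_Icc _ _)
        · apply ContinuousOn.congr (f := fun t : ℝ => Real.cos t / Real.sin t - 1/t)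
          · apply ContinuousOn.sub
            · apply ContinuousOn.div Real.continuous_cos.continuousOn
                Real.continuous_sin.continuousOn
              intro t ht
              have ht1 : 0 < t := lt_of_lt_of_le hx ht.1
              have ht2 : t < π := lt_of_le_of_lt ht.2 (by linarith)
              exact ne_of_gt (Real.sin_pos_of_pos_of_lt_pi ht1 ht2)
            · exact ContinuousOn.div continuousOn_const continuousOn_id
                (fun t ht => ne_of_gt (lt_of_lt_of_le hx ht.1))
          · intro t _
            simp only [Real.cot_eq_cos_div_sin]
        · intro t ht
          rw [interior_Icc] at ht
          have ht1 : 0 < t := lt_trans hx ht.1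
          have ht2 : t < π := lt_trans ht.2 (by linarith)
          have hsin : 0 < Real.sin t := Real.sin_pos_of_pos_of_lt_pi ht1 ht2
          have hsinlt : Real.sin t < t := Real.sin_lt ht1
          have hd1 : HasDerivAt (fun s : ℝ => Real.cot s - 1/s)
              ((-Real.sin t * Real.sin t - Real.cos t * Real.cos t) / (Real.sin t)^2
                - (-(t^2)⁻¹)) t := by
            have h1 : HasDerivAt (fun s : ℝ => Real.cot s)
                ((-Real.sin t * Real.sin t - Real.cos t * Real.cos t) / (Real.sin t)^2) t := by
              have := ((Real.hasDerivAt_cos t).div (Real.hasDerivAt_sin t)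
                (ne_of_gt hsin))
              apply this.congr_of_eventuallyEq
              filter_upwards [eventually_mem_nhds_iff.mpr
                (IsOpen.mem_nhds (isOpen_Ioo (a := (0:ℝ)) (b := π))
                  (Set.mem_Ioo.mpr ⟨ht1, ht2⟩))] with s hs
              exact Real.cot_eq_cos_div_sin s
            have h2 : HasDerivAt (fun s : ℝ => 1/s) (-(t^2)⁻¹) t := by
              simpa [one_div] using hasDerivAt_inv (ne_of_gt ht1)
            exact h1.sub h2
          rw [hd1.deriv]
          have hpyth : Real.sin t ^ 2 + Real.cos t ^ 2 = 1 := Real.sin_sq_add_cos_sq t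
          have hs2 : Real.sin t ^ 2 < t ^ 2 := by nlinarith
          have hone : -Real.sin t * Real.sin t - Real.cos t * Real.cos t = -1 := by nlinarith
          rw [hone]
          have hinv : (t^2)⁻¹ < (Real.sin t^2)⁻¹ :=
            inv_strictAnti₀ (by positivity) hs2
          have heq : (-1 : ℝ)/Real.sin t^2 = -((Real.sin t^2)⁻¹) := by
            rw [neg_div, one_div]
          rw [heq]
          linarith
      have := hanti (Set.mem_Icc.mpr ⟨le_refl x, hx'⟩)
        (Set.mem_Icc.mpr ⟨hx', le_refl _⟩) h
      simp only at this
      linarith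
  rw [hcotq] at key
  have h4 : 1/(π/4) = 4/π := by ring
  rw [h4] at key
  have hkey2 : π * Real.cot x ≥ π * (1 - 4/π + 1/x) := by
    apply mul_le_mul_of_nonneg_left _ (le_of_lt hpi0)
    linarith
  have hx0 : x ≠ 0 := ne_of_gt hx
  have e1 : π * (1 - 4/π + 1/x) = π - 4 + π/x := by
    field_simp
  rw [e1] at hkey2
  linarith
end

section
/- For all real a with 0 < a ≤ 1/2 and real x with 0 < x ≤ π/4, the function u(a,x) = a·(x − π)·cot(a·x) + π·cot(x) has strictly positive partial derivative in a; explicitly, ∂u/∂a = ((π − x)/(2·sin²(ax)))·(2ax − sin(2ax)) > 0. -/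
open Real

theorem u_deriv_pos (a x : ℝ) (ha : 0 < a) (ha' : a ≤ 1 / 2) (hx : 0 < x) (hx' : x ≤ π / 4) :
    HasDerivAt (fun t : ℝ => t * (x - π) * Real.cot (t * x) + π * Real.cot x)
      ((π - x) / (2 * Real.sin (a * x) ^ 2) * (2 * a * x - Real.sin (2 * a * x))) a ∧
    (π - x) / (2 * Real.sin (a * x) ^ 2) * (2 * a * x - Real.sin (2 * a * x)) > 0 := by
  have hpi := Real.pi_pos
  have hax : 0 < a * x := mul_pos ha hx
  have haxlt : a * x < π := by nlinarith
  have hs : 0 < Real.sin (a * x) := Real.sin_pos_of_pos_of_lt_pi hax haxlt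
  have hs' : Real.sin (a * x) ≠ 0 := ne_of_gt hs
  constructor
  · have hid : HasDerivAt (fun t : ℝ => t * x) x a := by
      simpa using (hasDerivAt_id a).mul_const x
    have hcos : HasDerivAt (fun t : ℝ => Real.cos (t * x)) (-Real.sin (a * x) * x) a := by
      have := (Real.hasDerivAt_cos (a * x)).comp a hid; exact this
    have hsin : HasDerivAt (fun t : ℝ => Real.sin (t * x)) (Real.cos (a * x) * x) a := by
      have := (Real.hasDerivAt_sin (a * x)).comp a hid; exact this
    have hcot : HasDerivAt (fun t : ℝ => Real.cot (t * x))
        ((-Real.sin (a * x) * x * Real.sin (a * x) -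
          Real.cos (a * x) * (Real.cos (a * x) * x)) / Real.sin (a * x) ^ 2) a := by
      have := hcos.div hsin hs'
      have e : (fun t : ℝ => Real.cot (t * x)) =
          (fun t => Real.cos (t * x)) / (fun t => Real.sin (t * x)) := by
        ext t; simp [Real.cot_eq_cos_div_sin]
      rw [e]; exact this
    have hlin : HasDerivAt (fun t : ℝ => t * (x - π)) (x - π) a := by
      simpa using (hasDerivAt_id a).mul_const (x - π)
    have h : HasDerivAt (fun t : ℝ => t * (x - π) * Real.cot (t * x) + π * Real.cot x)
        ((x - π) * Real.cot (a * x) + a * (x - π) * ((-Real.sin (a * x) * x * Real.sin (a * x) -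
          Real.cos (a * x) * (Real.cos (a * x) * x)) / Real.sin (a * x) ^ 2)) a := by
      have := (hlin.mul hcot).add_const (π * Real.cot x); exact this
    convert h using 1
    rw [Real.cot_eq_cos_div_sin, show 2*a*x = 2*(a*x) by ring, Real.sin_two_mul]
    have hpy : Real.sin (a * x) ^ 2 + Real.cos (a * x) ^ 2 = 1 := Real.sin_sq_add_cos_sq _
    field_simp
    rw [show x * a = a * x by ring]
    linear_combination ((x - π) * x * a / Real.sin (a * x) ^ 2) * hpy
  · have h1 : (0:ℝ) < π - x := by linarith
    have h2 : Real.sin (2 * (a * x)) < 2 * (a * x) := Real.sin_lt (by linarith)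
    have : Real.sin (2 * a * x) < 2 * a * x := by
      have := h2; linarith [this, (by ring : 2 * (a * x) = 2 * a * x) ▸ this]
    have hpos : 0 < 2 * a * x - Real.sin (2 * a * x) := by linarith
    positivity
end

section
/- For all integers m ≥ 2 and d ≥ 2, 2md·cot(π/(2m)) − 2m·cot(π/(2dm)) + cot(π/(2dm)) + cot((π/d)(1 − 1/(2m))) > 0. -/
open Real

lemma cot_pos_aux {t : ℝ} (h0 : 0 < t) (h1 : t < π / 2) : 0 < Real.cot t := by
  rw [Real.cot_eq_cos_div_sin]
  exact div_pos (Real.cos_pos_of_mem_Ioo ⟨by linarith [Real.pi_pos], h1⟩)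
    (Real.sin_pos_of_pos_of_lt_pi h0 (by linarith [Real.pi_pos]))

lemma cot_lt_inv_aux {t : ℝ} (h0 : 0 < t) (h1 : t < π / 2) : Real.cot t < 1 / t := by
  have ht : t < Real.tan t := Real.lt_tan h0 h1
  have htan : 0 < Real.tan t := lt_trans h0 ht
  rw [Real.cot_eq_cos_div_sin]
  have hs : Real.sin t > 0 := Real.sin_pos_of_pos_of_lt_pi h0 (by linarith [Real.pi_pos])
  rw [Real.tan_eq_sin_div_cos] at ht htan
  have hc : 0 < Real.cos t := Real.cos_pos_of_mem_Ioo ⟨by linarith [Real.pi_pos], h1⟩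
  rw [div_lt_div_iff₀ hs h0, lt_div_iff₀ hc] at *
  nlinarith

lemma cot_ge_aux {t : ℝ} (h0 : 0 < t) (h1 : t < π / 2) :
    (1 - t ^ 2 / 2) / t ≤ Real.cot t := by
  rw [Real.cot_eq_cos_div_sin]
  have hs : 0 < Real.sin t := Real.sin_pos_of_pos_of_lt_pi h0 (by linarith [Real.pi_pos])
  have hc : 0 ≤ Real.cos t := (Real.cos_pos_of_mem_Ioo ⟨by linarith [Real.pi_pos], h1⟩).le
  exact div_le_div₀ hc (Real.one_sub_sq_div_two_le_cos) hs (Real.sin_lt h0).le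

theorem quantum_gt_classical (m d : ℕ) (hm : 2 ≤ m) (hd : 2 ≤ d) :
    2 * (m : ℝ) * (d : ℝ) * Real.cot (π / (2 * (m : ℝ))) -
      2 * (m : ℝ) * Real.cot (π / (2 * (d : ℝ) * (m : ℝ))) +
      Real.cot (π / (2 * (d : ℝ) * (m : ℝ))) +
      Real.cot (π / (d : ℝ) * (1 - 1 / (2 * (m : ℝ)))) > 0 := by
  have hπ : 0 < π := Real.pi_pos
  have hM : (2 : ℝ) ≤ (m : ℝ) := by exact_mod_cast hm
  have hD : (2 : ℝ) ≤ (d : ℝ) := by exact_mod_cast hd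
  set M := (m : ℝ) with hMdef
  set D := (d : ℝ) with hDdef
  have hM0 : (0 : ℝ) < M := by linarith
  have hD0 : (0 : ℝ) < D := by linarith
  -- angles
  set a := π / (2 * M) with ha_def
  set b := π / (2 * D * M) with hb_def
  set c := π / D * (1 - 1 / (2 * M)) with hc_def
  have ha0 : 0 < a := div_pos hπ (by linarith)
  have hb0 : 0 < b := div_pos hπ (by positivity)
  have ha4 : a ≤ π / 4 := by
    rw [ha_def]
    apply div_le_div_of_nonneg_left hπ.le (by norm_num) (by linarith)
  have ha2 : a < π / 2 := by linarith
  have hb2 : b < π / 2 := by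
    rw [hb_def]
    calc π / (2 * D * M) ≤ π / (2 * 2 * 2) := by
          apply div_le_div_of_nonneg_left hπ.le (by norm_num) (by nlinarith)
      _ < π / 2 := by linarith
  have hc0 : 0 < c := by
    rw [hc_def]
    apply mul_pos (div_pos hπ hD0)
    have : 1 / (2 * M) ≤ 1 / 4 := by
      apply div_le_div_of_nonneg_left (by norm_num) (by norm_num) (by linarith)
    linarith
  have hc2 : c < π / 2 := by
    rw [hc_def]
    have h1 : (1 - 1 / (2 * M)) < 1 := by
      have : 0 < 1 / (2 * M) := by positivity
      linarith
    have h2 : π / D ≤ π / 2 := div_le_div_of_nonneg_left hπ.le (by norm_num) hD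
    calc π / D * (1 - 1 / (2 * M)) < π / D * 1 :=
          mul_lt_mul_of_pos_left h1 (div_pos hπ hD0)
      _ = π / D := by ring
      _ ≤ π / 2 := h2
  -- key facts
  have hcotc : 0 < Real.cot c := cot_pos_aux hc0 hc2
  have hcotb_pos : 0 < Real.cot b := cot_pos_aux hb0 hb2
  have hcotb : Real.cot b < 2 * D * M / π := by
    have := cot_lt_inv_aux hb0 hb2
    rwa [hb_def, one_div_div] at this
  -- lower bound for cot a : cot a > (2M - 1)/π
  have haM : a * (2 * M) = π := by
    rw [ha_def]; field_simp
  have hcota : (2 * M - 1) / π < Real.cot a := by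
    rcases eq_or_lt_of_le hM with hM2 | hM3
    · -- m = 2 : a = π/4, cot a = 1
      have ha' : a = π / 4 := by rw [ha_def, ← hM2]; ring
      have hcot1 : Real.cot a = 1 := by
        rw [ha', Real.cot_eq_cos_div_sin, Real.cos_pi_div_four, Real.sin_pi_div_four]
        norm_num
      rw [hcot1, ← hM2]
      rw [div_lt_one hπ]
      norm_num
      linarith [Real.pi_gt_three]
    · -- m ≥ 3
      have hM3' : (3 : ℝ) ≤ M := by
        rw [hMdef] at hM3 ⊢
        have h2m : 2 < m := by exact_mod_cast hM3
        exact_mod_cast h2m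
      have ha6 : a ≤ π / 6 := by
        rw [ha_def]
        apply div_le_div_of_nonneg_left hπ.le (by norm_num) (by linarith)
      have hkey : (2 * M - 1) / π < (1 - a ^ 2 / 2) / a := by
        rw [div_lt_div_iff₀ hπ ha0]
        have hπ32 : π < 3.15 := by linarith [Real.pi_lt_d2]
        have hπ3 : 3 < π := Real.pi_gt_three
        -- (2M-1)*a = π - a ; need π - a < π*(1 - a²/2) i.e. π*a²/2 < a i.e. π*a < 2
        have h2 : π * a < 2 := by nlinarith
        nlinarith
      exact lt_of_lt_of_le hkey (cot_ge_aux ha0 ha2)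
  -- combine
  have h1 : 2 * M * D * ((2 * M - 1) / π) < 2 * M * D * Real.cot a :=
    mul_lt_mul_of_pos_left hcota (by positivity)
  have h2 : (2 * M - 1) * Real.cot b < (2 * M - 1) * (2 * D * M / π) :=
    mul_lt_mul_of_pos_left hcotb (by linarith)
  have heq : 2 * M * D * ((2 * M - 1) / π) = (2 * M - 1) * (2 * D * M / π) := by
    field_simp
  linarith [h1, h2, heq, hcotc]
end

section
/- For all integers m ≥ 2, the limit as d → ∞ of the ratio of quantum to classical bound, namely 2m(d−1) / (tan(π/(2m))·[(2m−1)cot(π/(2dm)) − cot((π/d)(1 − 1/(2m)))] − 2m), equals (2m−1)·π·cot(π/(2m)) / (4m(m−1)). -/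
open Real Filter

lemma sin_div_self_lim : Tendsto (fun y : ℝ => y⁻¹ * Real.sin y) (nhdsWithin 0 {0}ᶜ) (nhds 1) := by
  have h := hasDerivAt_sin 0
  rw [hasDerivAt_iff_tendsto_slope] at h
  simpa [slope_fun_def, Real.sin_zero, Real.cos_zero] using h

lemma mul_cot_lim {c : ℝ} (hc : 0 < c) :
    Tendsto (fun x : ℝ => x * Real.cot (c * x)) (nhdsWithin 0 {0}ᶜ) (nhds c⁻¹) := by
  have hmap : Tendsto (fun x : ℝ => c * x) (nhdsWithin 0 {0}ᶜ) (nhdsWithin 0 {0}ᶜ) := by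
    rw [tendsto_nhdsWithin_iff]
    constructor
    · have : Tendsto (fun x : ℝ => c * x) (nhds 0) (nhds 0) := by
        simpa using (continuous_mul_left c).tendsto (0:ℝ)
      exact this.mono_left nhdsWithin_le_nhds
    · filter_upwards [self_mem_nhdsWithin] with x hx
      simp only [Set.mem_compl_iff, Set.mem_singleton_iff] at hx ⊢
      exact mul_ne_zero hc.ne' hx
  have hinv : Tendsto (fun y : ℝ => y * (Real.sin y)⁻¹) (nhdsWithin 0 {0}ᶜ) (nhds 1) := by
    have := sin_div_self_lim.inv₀ one_ne_zero
    simpa [mul_inv, mul_comm] using this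
  have hA : Tendsto (fun x : ℝ => (c * x) * (Real.sin (c * x))⁻¹) (nhdsWithin 0 {0}ᶜ) (nhds 1) :=
    hinv.comp hmap
  have hcos : Tendsto (fun x : ℝ => Real.cos (c * x)) (nhdsWithin 0 {0}ᶜ) (nhds 1) := by
    have : Tendsto (fun x : ℝ => Real.cos (c * x)) (nhds 0) (nhds 1) := by
      have h0 : Continuous (fun x : ℝ => Real.cos (c * x)) :=
        Real.continuous_cos.comp (continuous_const.mul continuous_id)
      simpa using h0.tendsto (0:ℝ)
    exact this.mono_left nhdsWithin_le_nhds
  have h := (tendsto_const_nhds (x := c⁻¹)).mul (hA.mul hcos)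
  rw [show c⁻¹ * (1 * 1) = c⁻¹ by ring] at h
  refine h.congr fun x => ?_
  rw [Real.cot_eq_cos_div_sin, div_eq_mul_inv]
  rw [show c⁻¹ * (c * x * (Real.sin (c*x))⁻¹ * Real.cos (c*x))
      = (c⁻¹ * c) * (x * Real.cos (c*x) * (Real.sin (c*x))⁻¹) by ring]
  rw [inv_mul_cancel₀ hc.ne', one_mul]
  ring

theorem ratio_QC_limit (m : ℕ) (hm : 2 ≤ m) :
    Filter.Tendsto (fun d : ℕ =>
        (2 * (m : ℝ) * ((d : ℝ) - 1)) /
          (Real.tan (π / (2 * (m : ℝ))) *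
            ((2 * (m : ℝ) - 1) * Real.cot (π / (2 * (d : ℝ) * (m : ℝ))) -
              Real.cot (π / (d : ℝ) * (1 - 1 / (2 * (m : ℝ))))) - 2 * (m : ℝ)))
      Filter.atTop
      (nhds ((2 * (m : ℝ) - 1) * π * Real.cot (π / (2 * (m : ℝ))) /
        (4 * (m : ℝ) * ((m : ℝ) - 1)))) := by
  have hm2 : (2:ℝ) ≤ (m:ℝ) := by exact_mod_cast hm
  have hm0 : (m:ℝ) ≠ 0 := by linarith
  have hm1 : (m:ℝ) - 1 ≠ 0 := by linarith
  have hm1' : 2 * (m:ℝ) - 1 ≠ 0 := by linarith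
  have hpi : (0:ℝ) < π := Real.pi_pos
  set c₁ : ℝ := π / (2 * (m:ℝ)) with hc₁def
  set c₂ : ℝ := π * (1 - 1 / (2 * (m:ℝ))) with hc₂def
  have hc₁ : 0 < c₁ := by positivity
  have hc₂ : 0 < c₂ := by
    have : (0:ℝ) < 1 - 1 / (2 * (m:ℝ)) := by
      rw [sub_pos, div_lt_one (by linarith)]; linarith
    positivity
  have hc₁lt : c₁ < π / 2 := by
    rw [hc₁def, div_lt_div_iff₀ (by linarith) (by norm_num)]
    nlinarith
  have htanpos : 0 < Real.tan c₁ := Real.tan_pos_of_pos_of_lt_pi_div_two hc₁ hc₁lt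
  have hsin : Real.sin c₁ ≠ 0 := by
    have := Real.sin_pos_of_pos_of_lt_pi hc₁ (by linarith)
    exact this.ne'
  have hcos : Real.cos c₁ ≠ 0 := by
    have := Real.cos_pos_of_mem_Ioo ⟨by linarith, hc₁lt⟩
    exact this.ne'
  have htend : Tendsto (fun d : ℕ => ((d:ℝ))⁻¹) atTop (nhdsWithin 0 {0}ᶜ) := by
    rw [tendsto_nhdsWithin_iff]
    refine ⟨tendsto_inv_atTop_zero.comp tendsto_natCast_atTop_atTop, ?_⟩
    filter_upwards [eventually_ge_atTop 1] with d hd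
    have : (0:ℝ) < (d:ℝ) := by exact_mod_cast Nat.lt_of_lt_of_le Nat.zero_lt_one hd
    simp [inv_ne_zero this.ne']
  have h1 : Tendsto (fun d : ℕ => ((d:ℝ))⁻¹ * Real.cot (c₁ * ((d:ℝ))⁻¹)) atTop (nhds c₁⁻¹) :=
    (mul_cot_lim hc₁).comp htend
  have h2 : Tendsto (fun d : ℕ => ((d:ℝ))⁻¹ * Real.cot (c₂ * ((d:ℝ))⁻¹)) atTop (nhds c₂⁻¹) :=
    (mul_cot_lim hc₂).comp htend
  have hz : Tendsto (fun d : ℕ => ((d:ℝ))⁻¹) atTop (nhds 0) :=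
    tendsto_inv_atTop_zero.comp tendsto_natCast_atTop_atTop
  -- denominator / d
  set L : ℝ := Real.tan c₁ * ((2 * (m:ℝ) - 1) * c₁⁻¹ - c₂⁻¹) with hLdef
  have hD : Tendsto (fun d : ℕ =>
      Real.tan c₁ * ((2 * (m:ℝ) - 1) * (((d:ℝ))⁻¹ * Real.cot (c₁ * ((d:ℝ))⁻¹))
        - ((d:ℝ))⁻¹ * Real.cot (c₂ * ((d:ℝ))⁻¹)) - 2 * (m:ℝ) * ((d:ℝ))⁻¹)
      atTop (nhds L) := by
    have := ((tendsto_const_nhds (x := Real.tan c₁)).mul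
      (((tendsto_const_nhds (x := 2 * (m:ℝ) - 1)).mul h1).sub h2)).sub
      ((tendsto_const_nhds (x := 2 * (m:ℝ))).mul hz)
    simpa using this
  have hN : Tendsto (fun d : ℕ => 2 * (m:ℝ) * (1 - ((d:ℝ))⁻¹)) atTop (nhds (2 * (m:ℝ))) := by
    have := (tendsto_const_nhds (x := 2 * (m:ℝ))).mul
      ((tendsto_const_nhds (x := (1:ℝ))).sub hz)
    simpa using this
  have hLpos : 0 < L := by
    rw [hLdef]
    have hgt : c₂⁻¹ < (2 * (m:ℝ) - 1) * c₁⁻¹ := by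
      have e1 : c₂⁻¹ = 2*(m:ℝ)/((2*(m:ℝ)-1)*π) := by
        rw [hc₂def]; field_simp <;> ring
      have e2 : (2*(m:ℝ)-1) * c₁⁻¹ = (2*(m:ℝ)-1)*(2*(m:ℝ))/π := by
        rw [hc₁def]; field_simp <;> ring
      rw [e1, e2, div_lt_div_iff₀ (mul_pos (by linarith) hpi) hpi]
      nlinarith [mul_pos hpi (show (0:ℝ) < (m:ℝ)*((m:ℝ)-1) by nlinarith)]
    have : 0 < (2 * (m:ℝ) - 1) * c₁⁻¹ - c₂⁻¹ := by linarith
    positivity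
  have hmain : Tendsto (fun d : ℕ =>
      (2 * (m:ℝ) * (1 - ((d:ℝ))⁻¹)) /
      (Real.tan c₁ * ((2 * (m:ℝ) - 1) * (((d:ℝ))⁻¹ * Real.cot (c₁ * ((d:ℝ))⁻¹))
        - ((d:ℝ))⁻¹ * Real.cot (c₂ * ((d:ℝ))⁻¹)) - 2 * (m:ℝ) * ((d:ℝ))⁻¹))
      atTop (nhds (2 * (m:ℝ) / L)) := hN.div hD hLpos.ne'
  have hLval : L = Real.tan c₁ * (8*(m:ℝ)^2*((m:ℝ)-1) / ((2*(m:ℝ)-1)*π)) := by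
    rw [hLdef, hc₁def, hc₂def]
    field_simp
    ring
  have hcotc : Real.cot c₁ = (Real.tan c₁)⁻¹ := by
    rw [Real.cot_eq_cos_div_sin, Real.tan_eq_sin_div_cos, inv_div]
  have hlimval : 2 * (m:ℝ) / L =
      (2 * (m:ℝ) - 1) * π * Real.cot c₁ / (4 * (m:ℝ) * ((m:ℝ) - 1)) := by
    rw [hLval, hcotc]
    field_simp
    ring
  rw [← hlimval]
  refine hmain.congr' ?_
  filter_upwards [eventually_ge_atTop 1] with d hd
  have hd0 : (0:ℝ) < (d:ℝ) := by exact_mod_cast Nat.lt_of_lt_of_le Nat.zero_lt_one hd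
  have hdne : (d:ℝ) ≠ 0 := hd0.ne'
  have harg1 : π / (2 * (d:ℝ) * (m:ℝ)) = c₁ * ((d:ℝ))⁻¹ := by
    rw [hc₁def, div_mul_eq_mul_div, ← div_eq_mul_inv, div_div]; congr 1; ring
  have harg2 : π / (d:ℝ) * (1 - 1 / (2 * (m:ℝ))) = c₂ * ((d:ℝ))⁻¹ := by
    rw [hc₂def, div_eq_mul_inv]; ring
  have hnum : 2*(m:ℝ)*((d:ℝ)-1) = (d:ℝ) * (2*(m:ℝ)*(1-((d:ℝ))⁻¹)) := by
    field_simp <;> ring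
  have hden : Real.tan c₁ * ((2*(m:ℝ)-1)*Real.cot (c₁*((d:ℝ))⁻¹) - Real.cot (c₂*((d:ℝ))⁻¹))
      - 2*(m:ℝ) = (d:ℝ) * (Real.tan c₁ * ((2 * (m:ℝ) - 1) * (((d:ℝ))⁻¹ * Real.cot (c₁ * ((d:ℝ))⁻¹))
        - ((d:ℝ))⁻¹ * Real.cot (c₂ * ((d:ℝ))⁻¹)) - 2 * (m:ℝ) * ((d:ℝ))⁻¹) := by
    field_simp <;> ring
  rw [harg1, harg2, hnum, hden, mul_div_mul_left _ _ hdne]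
end

section
/- Let m ≥ 2 and d ≥ 2 be odd integers (d odd), ω = exp(2πi/d), a_l = ω^{(2l−d)/(4m)}/(2cos(π/(2m))) for l ∈ {1,...,(d−1)/2}, c_l = a_l and c_{−l} = conj(a_l), I = {−(d−1)/2,...,−1,1,...,(d−1)/2}. Then for each integer n with 0 ≤ n ≤ (d−1)/2 − 1 (or n = ⌊d/2⌋), ∑_{l∈I} c_l·ω^{nl} = (1/2)·(tan(π/(2m))·cot((π/d)(n + 1/(2m))) − 1). -/
open Real

lemma tele (α θ : ℝ) (D : ℕ) :
    (∑ l ∈ Finset.Icc (1:ℤ) (D:ℤ), Real.cos (2*(l:ℝ)*α - θ)) * (2 * Real.sin α)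
      = Real.sin ((2*(D:ℝ)+1)*α - θ) - Real.sin (α - θ) := by
  induction D with
  | zero => simp
  | succ D ih =>
    have hins : Finset.Icc (1:ℤ) ((D+1:ℕ):ℤ) = insert ((D:ℤ)+1) (Finset.Icc (1:ℤ) (D:ℤ)) := by
      ext x; simp; omega
    have hnm : ((D:ℤ)+1) ∉ Finset.Icc (1:ℤ) (D:ℤ) := by simp
    rw [hins, Finset.sum_insert hnm]
    have key : Real.sin ((2*((D:ℝ)+1)+1)*α - θ) - Real.sin ((2*(D:ℝ)+1)*α - θ)
        = Real.cos (2*((D:ℝ)+1)*α - θ) * (2*Real.sin α) := by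
      rw [Real.sin_sub_sin]
      have e1 : (((2*((D:ℝ)+1)+1)*α - θ) - ((2*(D:ℝ)+1)*α - θ))/2 = α := by ring
      have e2 : (((2*((D:ℝ)+1)+1)*α - θ) + ((2*(D:ℝ)+1)*α - θ))/2 = 2*((D:ℝ)+1)*α - θ := by ring
      rw [e1, e2]; ring
    push_cast
    push_cast at key
    linarith [ih, key, mul_comm (Real.cos (2*((D:ℝ)+1)*α - θ) + ∑ l ∈ Finset.Icc (1:ℤ) (D:ℤ), Real.cos (2*(l:ℝ)*α - θ)) (2*Real.sin α)]

theorem c_l_sum (m d : ℕ) (hm : 2 ≤ m) (hd : 2 ≤ d) (hodd : Odd d)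
    (a : ℤ → ℂ)
    (ha : ∀ l : ℤ, a l =
      Complex.exp (2 * (π : ℂ) * Complex.I * ((2 * (l : ℂ) - (d : ℂ)) / (4 * (m : ℂ))) / (d : ℂ)) /
        (2 * (Real.cos (π / (2 * (m : ℝ))) : ℂ)))
    (n : ℕ) (hn : n ≤ (d - 1) / 2) :
    ∑ l ∈ (Finset.Icc (-(((d : ℤ) - 1) / 2)) (((d : ℤ) - 1) / 2)).erase 0,
      (if 0 < l then a l else (starRingEnd ℂ) (a (-l))) *
        (Complex.exp (2 * (π : ℂ) * Complex.I / (d : ℂ))) ^ ((n : ℤ) * l) =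
      (((1 / 2) * (Real.tan (π / (2 * (m : ℝ))) *
        Real.cot (π / (d : ℝ) * ((n : ℝ) + 1 / (2 * (m : ℝ)))) - 1) : ℝ) : ℂ) := by
  obtain ⟨k, hk⟩ := hodd
  have hmR : (2:ℝ) ≤ (m:ℝ) := by exact_mod_cast hm
  have hm0 : (m:ℝ) ≠ 0 := by positivity
  have hd0 : (d:ℝ) ≠ 0 := by positivity
  have hm0C : (m:ℂ) ≠ 0 := by exact_mod_cast Nat.cast_ne_zero.mpr (by omega)
  have hd0C : (d:ℂ) ≠ 0 := by exact_mod_cast Nat.cast_ne_zero.mpr (by omega)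
  have hdR : (d:ℝ) = 2*(k:ℝ)+1 := by exact_mod_cast congrArg (Nat.cast : ℕ → ℝ) hk
  set θ : ℝ := π / (2 * (m:ℝ)) with hθ
  set α : ℝ := π / (d:ℝ) * ((n:ℝ) + 1 / (2 * (m:ℝ))) with hα
  have hθpos : 0 < θ := by rw [hθ]; positivity
  have hθlt : θ < π/2 := by
    rw [hθ]
    exact div_lt_div_of_pos_left Real.pi_pos (by norm_num) (by linarith)
  have hcosθ : 0 < Real.cos θ := Real.cos_pos_of_mem_Ioo ⟨by linarith, hθlt⟩
  have hnk : (n:ℝ) ≤ (k:ℝ) := by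
    have : n ≤ k := by omega
    exact_mod_cast this
  have hαpos : 0 < α := by
    rw [hα]
    have := Real.pi_pos
    positivity
  have hαlt : α < π/2 := by
    have h1 : (n:ℝ) + 1/(2*(m:ℝ)) < (d:ℝ)/2 := by
      have h2 : (1:ℝ)/(2*(m:ℝ)) ≤ 1/4 := by
        rw [div_le_div_iff₀ (by linarith) (by norm_num)]; linarith
      rw [hdR]; linarith
    have h3 : α < π/(d:ℝ) * ((d:ℝ)/2) := by
      rw [hα]
      exact mul_lt_mul_of_pos_left h1 (by positivity)
    have h4 : π/(d:ℝ) * ((d:ℝ)/2) = π/2 := by field_simp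
    linarith
  have hsinα : 0 < Real.sin α := Real.sin_pos_of_pos_of_lt_pi hαpos (by linarith [Real.pi_pos])
  have hDk : (((d:ℤ)-1)/2) = (k:ℤ) := by
    have : (d:ℤ) = 2*(k:ℤ)+1 := by exact_mod_cast hk
    omega
  rw [hDk]
  have hsplit : (Finset.Icc (-(k:ℤ)) (k:ℤ)).erase 0
      = Finset.Icc (-(k:ℤ)) (-1) ∪ Finset.Icc 1 (k:ℤ) := by
    ext x; simp only [Finset.mem_erase, Finset.mem_Icc, Finset.mem_union]; omega
  have hdisj : Disjoint (Finset.Icc (-(k:ℤ)) (-1)) (Finset.Icc 1 (k:ℤ)) := by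
    rw [Finset.disjoint_left]; intro x hx hx'
    simp only [Finset.mem_Icc] at hx hx'; omega
  have himg : Finset.Icc (-(k:ℤ)) (-1) = (Finset.Icc (1:ℤ) (k:ℤ)).image (fun l => -l) := by
    ext x; simp only [Finset.mem_Icc, Finset.mem_image]
    constructor
    · intro h; exact ⟨-x, by omega, by omega⟩
    · rintro ⟨y, hy, rfl⟩; omega
  rw [hsplit, Finset.sum_union hdisj, himg,
    Finset.sum_image (by intro x _ y _ h; exact neg_injective h), ← Finset.sum_add_distrib]
  have hstep : ∀ l ∈ Finset.Icc (1:ℤ) (k:ℤ),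
      ((if 0 < -l then a (-l) else (starRingEnd ℂ) (a (-(-l)))) *
        Complex.exp (2 * (π:ℂ) * Complex.I / (d:ℂ)) ^ ((n:ℤ) * -l)) +
      ((if 0 < l then a l else (starRingEnd ℂ) (a (-l))) *
        Complex.exp (2 * (π:ℂ) * Complex.I / (d:ℂ)) ^ ((n:ℤ) * l))
      = ((Real.cos (2*(l:ℝ)*α - θ) / Real.cos θ : ℝ) : ℂ) := by
    intro l hl
    simp only [Finset.mem_Icc] at hl
    rw [if_pos (by omega : (0:ℤ) < l), if_neg (by omega : ¬ (0:ℤ) < -l), neg_neg]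
    have hexp : 2*(π:ℂ)*Complex.I * ((2*(l:ℂ) - (d:ℂ))/(4*(m:ℂ)))/(d:ℂ)
        + (((n:ℤ)*l : ℤ):ℂ) * (2*(π:ℂ)*Complex.I/(d:ℂ))
        = ((2*(l:ℝ)*α - θ : ℝ):ℂ) * Complex.I := by
      rw [hα, hθ]
      push_cast
      field_simp
      ring
    have hFl : a l * Complex.exp (2 * (π:ℂ) * Complex.I / (d:ℂ)) ^ ((n:ℤ) * l)
        = Complex.exp (((2*(l:ℝ)*α - θ : ℝ):ℂ) * Complex.I) / ((2 * Real.cos θ : ℝ):ℂ) := by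
      rw [ha l, ← Complex.exp_int_mul, div_mul_eq_mul_div, ← Complex.exp_add, hexp]
      push_cast
      ring
    have hconjz : (starRingEnd ℂ) (Complex.exp (2*(π:ℂ)*Complex.I/(d:ℂ)) ^ ((n:ℤ)*l))
        = Complex.exp (2*(π:ℂ)*Complex.I/(d:ℂ)) ^ ((n:ℤ) * -l) := by
      rw [← Complex.exp_int_mul, ← Complex.exp_int_mul, ← Complex.exp_conj]
      congr 1
      simp only [map_mul, map_div₀, map_intCast, Complex.conj_I, map_ofNat,
        Complex.conj_ofReal, map_natCast]
      push_cast
      ring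
    have hFml : (starRingEnd ℂ) (a l) * Complex.exp (2*(π:ℂ)*Complex.I/(d:ℂ)) ^ ((n:ℤ) * -l)
        = Complex.exp (-(((2*(l:ℝ)*α - θ : ℝ):ℂ) * Complex.I)) / ((2 * Real.cos θ : ℝ):ℂ) := by
      rw [← hconjz, ← map_mul, hFl, map_div₀, Complex.conj_ofReal]
      congr 1
      rw [← Complex.exp_conj]
      congr 1
      rw [map_mul, Complex.conj_ofReal, Complex.conj_I]
      ring
    rw [hFl, hFml, ← add_div]
    have hsum : Complex.exp (-(((2*(l:ℝ)*α - θ : ℝ):ℂ) * Complex.I))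
        + Complex.exp (((2*(l:ℝ)*α - θ : ℝ):ℂ) * Complex.I)
        = 2 * ((Real.cos (2*(l:ℝ)*α - θ) : ℝ):ℂ) := by
      rw [show -(((2*(l:ℝ)*α - θ : ℝ):ℂ) * Complex.I) = (-((2*(l:ℝ)*α - θ : ℝ):ℂ)) * Complex.I by ring,
        Complex.exp_mul_I, Complex.exp_mul_I, Complex.cos_neg, Complex.sin_neg,
        Complex.ofReal_cos]
      ring
    rw [hsum]
    have hcθ : ((Real.cos θ : ℝ):ℂ) ≠ 0 := Complex.ofReal_ne_zero.mpr (ne_of_gt hcosθ)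
    push_cast
    rw [mul_div_mul_left _ _ (by norm_num : (2:ℂ) ≠ 0)]
  rw [Finset.sum_congr rfl hstep, ← Complex.ofReal_sum]
  congr 1
  rw [← Finset.sum_div]
  have htele := tele α θ k
  have hπn : (2*(k:ℝ)+1)*α - θ = (n:ℝ) * π := by
    rw [hα, hθ, show (2*(k:ℝ)+1) = (d:ℝ) from hdR.symm]
    field_simp
    ring
  rw [hπn, Real.sin_nat_mul_pi] at htele
  have hsa : Real.sin α ≠ 0 := ne_of_gt hsinα
  have hca : Real.cos θ ≠ 0 := ne_of_gt hcosθ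
  rw [Real.sin_sub] at htele
  have hS : (∑ l ∈ Finset.Icc (1:ℤ) (k:ℤ), Real.cos (2*(l:ℝ)*α - θ))
      = (Real.cos α * Real.sin θ - Real.sin α * Real.cos θ)/(2*Real.sin α) := by
    rw [eq_div_iff (by positivity)]
    linarith [htele]
  rw [hS, Real.tan_eq_sin_div_cos, Real.cot_eq_cos_div_sin]
  field_simp
end
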